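/- Let E, M : Z × Z → Prop be predicates satisfying for all integers a, b: (M1) M(a, b+1) → M(a, b); (M2) E(a+1, b) ∧ M(a, b) → M(a, b+1); (E1) E(a, b) → E(a, b+1); (E2) M(a-1, b+1) ∧ E(a, b+1) → E(a, b). Suppose moreover that E(a, a) holds for all a and M(a-1, a) holds for all a. Then E(a, b) and M(a, b) hold for all integers a, b. -/

import Mathlib

/-- The double induction underlying the regular-representation Whitehead lemma. -/
theorem stmt8 (E M : ℤ → ℤ → Prop)
    (M1 : ∀ a b : ℤ, M a (b + 1) → M a b)
    (M2 : ∀ a b : ℤ, E (a + 1) b → M a b → M a (b + 1))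
    (E1 : ∀ a b : ℤ, E a b → E a (b + 1))
    (E2 : ∀ a b : ℤ, M (a - 1) (b + 1) → E a (b + 1) → E a b)
    (hE : ∀ a : ℤ, E a a) (hM : ∀ a : ℤ, M (a - 1) a) :
    ∀ a b : ℤ, E a b ∧ M a b := by
  -- E above the diagonal
  have hEup : ∀ a b : ℤ, a ≤ b → E a b := fun a =>
    Int.le_induction (hE a) (fun n _ ih => E1 a n ih)
  -- M (a-1) b for all b
  have hMall' : ∀ a b : ℤ, M (a - 1) b := by
    intro a b
    rcases le_total a b with h | h
    · exact Int.le_induction (motive := fun b _ => M (a - 1) b) (hM a)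
        (fun n hn ih => M2 (a - 1) n (by simpa using hEup a n hn) ih) b h
    · exact Int.le_induction_down (motive := fun b _ => M (a - 1) b) (hM a)
        (fun n _ ih => M1 _ _ (by simpa using ih)) b h
  have hMall : ∀ a b : ℤ, M a b := fun a b => by
    simpa using hMall' (a + 1) b
  intro a b
  refine ⟨?_, hMall a b⟩
  rcases le_total a b with h | h
  · exact hEup a b h
  · exact Int.le_induction_down (motive := fun b _ => E a b) (hE a)
      (fun n _ ih => E2 a (n - 1) (by simpa using hMall (a - 1) n) (by simpa using ih)) b h
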